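/- Every atomic resimple expression denotes a recognizable subset of ℕ^k; concretely, if R = γ + B^⊕ where B is a free basis all of whose elements are of the form n·e_j (n > 0), then the set denoted by R equals a product S₁ × ⋯ × S_k of subsets of ℕ, where S_j = c_j + p_j·ℕ if p_j·e_j ∈ B and S_j = {c_j} otherwise (with γ = (c₁,…,c_k)). -/

import Mathlib

/-- A finite subset `B` of `ℕ^k` is a free basis if nonnegative integer combinations of its
elements are unique. -/
def FreeBasis {k : ℕ} (B : Finset (Fin k → ℕ)) : Prop :=
  ∀ c d : (Fin k → ℕ) → ℕ,
    (∑ b ∈ B, c b • b) = (∑ b ∈ B, d b • b) → ∀ b ∈ B, c b = d b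

/-- A free basis contains at most one `j`-primary element for each `j`. -/
lemma freeBasis_primary_unique {k : ℕ} {B : Finset (Fin k → ℕ)} (hfree : FreeBasis B)
    {j : Fin k} {p q : ℕ} (hp : 0 < p) (hq : 0 < q)
    (hpB : (Pi.single j p : Fin k → ℕ) ∈ B) (hqB : (Pi.single j q : Fin k → ℕ) ∈ B) :
    p = q := by
  by_contra hne
  have hsingle : (Pi.single j p : Fin k → ℕ) ≠ Pi.single j q := by
    intro h
    exact hne (by simpa using congrFun h j)
  classical
  set c : (Fin k → ℕ) → ℕ := fun b => if b = Pi.single j p then q else 0 with hc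
  set d : (Fin k → ℕ) → ℕ := fun b => if b = Pi.single j q then p else 0 with hd
  have hsum : (∑ b ∈ B, c b • b) = (∑ b ∈ B, d b • b) := by
    rw [Finset.sum_eq_single (Pi.single j p), Finset.sum_eq_single (Pi.single j q)]
    · simp only [hc, hd, if_pos rfl]
      ext i
      by_cases hij : i = j
      · subst hij; simp [Nat.mul_comm]
      · simp [Pi.single_eq_of_ne hij]
    · intro b _ hb; simp [hd, hb]
    · intro h; exact absurd hqB h
    · intro b _ hb; simp [hc, hb]
    · intro h; exact absurd hpB h
  have := hfree c d hsum (Pi.single j p) hpB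
  simp only [hc, hd, if_pos rfl, if_neg hsingle] at this
  exact hq.ne' this

/-- An atomic resimple expression `γ + B^⊕`, with `B` a free basis of primary elements,
denotes the product over coordinates `j` of the sets `S_j`, where `S_j = γ j + p·ℕ`
if `p·e_j ∈ B` and `S_j = {γ j}` otherwise.  In particular it is recognizable. -/
theorem atomicResimple_denotes_product {k : ℕ} (γ : Fin k → ℕ) (B : Finset (Fin k → ℕ))
    (hfree : FreeBasis B)
    (hprim : ∀ b ∈ B, ∃ j n, 0 < n ∧ b = Pi.single j n) :
    {σ : Fin k → ℕ | ∃ b ∈ AddSubmonoid.closure (B : Set (Fin k → ℕ)), σ = γ + b} =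
      {σ : Fin k → ℕ | ∀ j,
        (∃ p n, 0 < p ∧ (Pi.single j p : Fin k → ℕ) ∈ B ∧ σ j = γ j + n * p) ∨
        ((∀ p, 0 < p → (Pi.single j p : Fin k → ℕ) ∉ B) ∧ σ j = γ j)} := by
  classical
  ext σ
  simp only [Set.mem_setOf_eq]
  constructor
  · rintro ⟨b, hb, rfl⟩
    -- key invariant for elements of the closure
    have key : ∀ x ∈ AddSubmonoid.closure (B : Set (Fin k → ℕ)),
        ∀ j, x j = 0 ∨ ∃ p n, 0 < p ∧ (Pi.single j p : Fin k → ℕ) ∈ B ∧ x j = n * p := by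
      intro x hx
      induction hx using AddSubmonoid.closure_induction with
      | mem y hy =>
        intro j
        obtain ⟨j', n, hn, rfl⟩ := hprim y hy
        by_cases hjj : j = j'
        · subst hjj
          right
          exact ⟨n, 1, hn, hy, by simp⟩
        · left; simp [Pi.single_eq_of_ne hjj]
      | zero => intro j; left; rfl
      | add y z hy hz ihy ihz =>
        intro j
        rcases ihy j with h1 | ⟨p, n, hp, hpB, hyp⟩
        · rcases ihz j with h2 | ⟨p, n, hp, hpB, hzp⟩
          · left; simp [Pi.add_apply, h1, h2]
          · right; exact ⟨p, n, hp, hpB, by simp [Pi.add_apply, h1, hzp]⟩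
        · rcases ihz j with h2 | ⟨q, m, hq, hqB, hzq⟩
          · right; exact ⟨p, n, hp, hpB, by simp [Pi.add_apply, h2, hyp]⟩
          · right
            have hpq : p = q := freeBasis_primary_unique hfree hp hq hpB hqB
            subst hpq
            exact ⟨p, n + m, hp, hpB, by simp [Pi.add_apply, hyp, hzq, Nat.add_mul]⟩
    intro j
    rcases key b hb j with h0 | ⟨p, n, hp, hpB, hbp⟩
    · by_cases hex : ∃ p, 0 < p ∧ (Pi.single j p : Fin k → ℕ) ∈ B
      · obtain ⟨p, hp, hpB⟩ := hex
        exact Or.inl ⟨p, 0, hp, hpB, by simp [Pi.add_apply, h0]⟩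
      · push_neg at hex
        exact Or.inr ⟨hex, by simp [Pi.add_apply, h0]⟩
    · exact Or.inl ⟨p, n, hp, hpB, by simp [Pi.add_apply, hbp]⟩
  · intro h
    -- build b coordinatewise
    have hchoice : ∀ j, ∃ t : ℕ, σ j = γ j + t ∧
        (Pi.single j t : Fin k → ℕ) ∈ AddSubmonoid.closure (B : Set (Fin k → ℕ)) := by
      intro j
      rcases h j with ⟨p, n, hp, hpB, hσ⟩ | ⟨_, hσ⟩
      · refine ⟨n * p, hσ, ?_⟩
        have : (Pi.single j (n * p) : Fin k → ℕ) = n • (Pi.single j p : Fin k → ℕ) := by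
          ext i
          by_cases hij : i = j
          · subst hij; simp
          · simp [Pi.single_eq_of_ne hij]
        rw [this]
        exact (AddSubmonoid.closure (B : Set (Fin k → ℕ))).nsmul_mem (AddSubmonoid.subset_closure hpB) n
      · exact ⟨0, by simp [hσ], by simpa using (AddSubmonoid.closure (B : Set (Fin k → ℕ))).zero_mem⟩
    choose t ht hmem using hchoice
    refine ⟨∑ j, Pi.single j (t j), AddSubmonoid.sum_mem _ (fun j _ => hmem j), ?_⟩
    have : (∑ j, (Pi.single j (t j) : Fin k → ℕ)) = t := Finset.univ_sum_single t
    rw [this]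
    ext j
    simpa using ht j
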